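/- Let 1 < p < ∞ and let (B_i)_{i∈ℕ} be a sequence of Banach spaces. If the ℓ^p-direct sum ⊕_p B_i := { b = (b_i) : b_i ∈ B_i, (∑ ‖b_i‖^p)^{1/p} < ∞ } is uniformly convex, then the family (B_i) has a common modulus of convexity, i.e., inf_i δ_{B_i}(t) > 0 for every t > 0. -/

import Mathlib

open ENNReal

private lemma lp_single_add {p : ℝ≥0∞} [Fact (1 ≤ p)] {B : ℕ → Type*}
    [∀ i, NormedAddCommGroup (B i)] (i : ℕ) (a b : B i) :
    lp.single p i (a + b) = lp.single p i a + lp.single p i b := by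
  refine lp.ext (funext fun j => ?_)
  by_cases hj : j = i
  · subst hj; simp [lp.single_apply_self]
  · simp [lp.single_apply_ne p i _ hj]

private lemma lp_norm_single {p : ℝ≥0∞} [Fact (1 ≤ p)] (hp : 0 < p.toReal) {B : ℕ → Type*}
    [∀ i, NormedAddCommGroup (B i)] (i : ℕ) (a : B i) :
    ‖lp.single p i a‖ = ‖a‖ := by
  have := lp.norm_single (E := B) (ENNReal.toReal_pos_iff.mp hp).1 i a
  simpa using this

/-- If the `ℓ^p` direct sum of Banach spaces is uniformly convex, the family has a
common modulus of convexity. -/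
theorem stmt_9 (p : ℝ≥0∞) [Fact (1 ≤ p)] (hp : 1 < p) (hp' : p ≠ ⊤)
    (B : ℕ → Type*) [∀ i, NormedAddCommGroup (B i)] [∀ i, NormedSpace ℝ (B i)]
    [∀ i, CompleteSpace (B i)] [∀ i, Nontrivial (B i)]
    (δ : ℕ → ℝ → ℝ)
    (hδ : ∀ i (t : ℝ), δ i t = sInf {s : ℝ | ∃ ξ ξ' : B i,
      ‖ξ‖ = 1 ∧ ‖ξ'‖ = 1 ∧ t ≤ ‖ξ - ξ'‖ ∧ s = 1 - ‖ξ + ξ'‖ / 2})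
    (huc : UniformConvexSpace (lp B p)) :
    ∀ t : ℝ, 0 < t → t ≤ 2 → 0 < ⨅ i, δ i t := by
  intro t ht ht2
  have hptR : 0 < p.toReal := ENNReal.toReal_pos (lt_trans one_pos hp).ne' hp'
  obtain ⟨ε, hε, hεconv⟩ := exists_forall_sphere_dist_add_le_two_sub (lp B p) ht
  have key : ∀ i, ε / 2 ≤ δ i t := by
    intro i
    rw [hδ]
    refine le_csInf ?_ ?_
    · -- nonempty: take a unit vector ξ and ξ' = -ξ
      obtain ⟨ξ, hξ⟩ := exists_norm_eq (B i) (zero_le_one)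
      exact ⟨1 - ‖ξ + -ξ‖ / 2, ξ, -ξ, hξ, by simpa using hξ,
        by rw [sub_neg_eq_add, ← two_smul ℝ ξ, norm_smul, hξ]; simpa using ht2, rfl⟩
    · rintro s ⟨ξ, ξ', hξ, hξ', htle, rfl⟩
      have h1 : ‖lp.single p i ξ‖ = 1 := by rw [lp_norm_single hptR]; exact hξ
      have h2 : ‖lp.single p i ξ'‖ = 1 := by rw [lp_norm_single hptR]; exact hξ'
      have hsub : lp.single p i ξ - lp.single p i ξ' = lp.single p i (ξ - ξ') := by
        rw [sub_eq_add_neg, sub_eq_add_neg, lp_single_add, lp.single_neg]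
      have hdist : t ≤ ‖lp.single p i ξ - lp.single p i ξ'‖ := by
        rw [hsub, lp_norm_single hptR]; exact htle
      have := hεconv h1 h2 hdist
      rw [← lp_single_add, lp_norm_single hptR] at this
      linarith
  have hpos : (0 : ℝ) < ε / 2 := by linarith
  exact lt_of_lt_of_le hpos (le_ciInf key)
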